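/- Let 𝔄 be the Boolean frame whose Boolean algebra is P(ℕ) × P(ℕ) and whose unary operation F is defined by F(a, b) = (f(a), f(b)) if a = b and F(a, b) = (ℕ, ℕ) if a ≠ b, where f(X) = ℕ if 0 ∈ X and f(X) = {n − 1 : n ∈ X} otherwise, and let U be a nonprincipal ultrafilter on ℕ. Then the ultrapower 𝔄^ℕ/U does not have the congruence extension property; moreover HS(𝔄^ℕ/U) ≠ SH(𝔄^ℕ/U). -/

import Mathlib

universe u v

/-- A congruence of the Boolean frame `(α, f)`: an equivalence relation compatible
with the Boolean operations and with `f`. -/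
structure IsCongr {α : Type u} [BooleanAlgebra α] (f : α → α) (Θ : α → α → Prop) : Prop where
  refl : ∀ x, Θ x x
  symm : ∀ {x y}, Θ x y → Θ y x
  trans : ∀ {x y z}, Θ x y → Θ y z → Θ x z
  inf : ∀ {x y x' y'}, Θ x y → Θ x' y' → Θ (x ⊓ x') (y ⊓ y')
  compl : ∀ {x y}, Θ x y → Θ xᶜ yᶜ
  map : ∀ {x y}, Θ x y → Θ (f x) (f y)

/-- `B` is (the universe of) a subalgebra of the Boolean frame `(α, f)`:
it contains `⊥` and is closed under `⊓`, complement and `f`. -/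
def IsSubalg {α : Type u} [BooleanAlgebra α] (f : α → α) (B : Set α) : Prop :=
  ⊥ ∈ B ∧ (∀ x ∈ B, ∀ y ∈ B, x ⊓ y ∈ B) ∧ (∀ x ∈ B, xᶜ ∈ B) ∧ (∀ x ∈ B, f x ∈ B)

/-- A congruence of the Boolean frame whose universe is the subset `B` of `α`
(with the operations restricted from `(α, f)`), encoded as a relation on `α`
whose domain is contained in `B`. -/
structure IsCongrOn {α : Type u} [BooleanAlgebra α] (f : α → α) (B : Set α)
    (Θ : α → α → Prop) : Prop where
  dom : ∀ {x y}, Θ x y → x ∈ B ∧ y ∈ B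
  refl : ∀ x ∈ B, Θ x x
  symm : ∀ {x y}, Θ x y → Θ y x
  trans : ∀ {x y z}, Θ x y → Θ y z → Θ x z
  inf : ∀ {x y x' y'}, Θ x y → Θ x' y' → Θ (x ⊓ x') (y ⊓ y')
  compl : ∀ {x y}, Θ x y → Θ xᶜ yᶜ
  map : ∀ {x y}, Θ x y → Θ (f x) (f y)

/-- The Boolean frame `(α, f)` has the congruence extension property: every congruence
of every subalgebra is the restriction of a congruence of the whole frame. -/
def HasCEP {α : Type u} [BooleanAlgebra α] (f : α → α) : Prop :=
  ∀ B : Set α, IsSubalg f B → ∀ Θ : α → α → Prop, IsCongrOn f B Θ →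
    ∃ Ψ : α → α → Prop, IsCongr f Ψ ∧ ∀ x y, Θ x y ↔ (Ψ x y ∧ x ∈ B ∧ y ∈ B)

/-- `φ` is a homomorphism of Boolean frames `(α, f) → (β, g)`. -/
def IsHom {α : Type u} {β : Type v} [BooleanAlgebra α] [BooleanAlgebra β]
    (f : α → α) (g : β → β) (φ : α → β) : Prop :=
  φ ⊥ = ⊥ ∧ (∀ x y, φ (x ⊓ y) = φ x ⊓ φ y) ∧ (∀ x, φ xᶜ = (φ x)ᶜ) ∧ ∀ x, φ (f x) = g (φ x)

/-- `(δ, g) ∈ HS(α, f)`: `(δ, g)` is a homomorphic image of a subalgebra of `(α, f)`. -/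
def MemHS {α δ : Type u} [BooleanAlgebra α] [BooleanAlgebra δ] (f : α → α) (g : δ → δ) : Prop :=
  ∃ (γ : Type u) (iγ : BooleanAlgebra γ) (h : γ → γ) (i : γ → α) (s : γ → δ),
    @IsHom γ α iγ _ h f i ∧ Function.Injective i ∧
    @IsHom γ δ iγ _ h g s ∧ Function.Surjective s

/-- `(δ, g) ∈ SH(α, f)`: `(δ, g)` embeds into a homomorphic image of `(α, f)`. -/
def MemSH {α δ : Type u} [BooleanAlgebra α] [BooleanAlgebra δ] (f : α → α) (g : δ → δ) : Prop :=
  ∃ (γ : Type u) (iγ : BooleanAlgebra γ) (h : γ → γ) (s : α → γ) (i : δ → γ),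
    @IsHom α γ _ iγ f h s ∧ Function.Surjective s ∧
    @IsHom δ γ _ iγ g h i ∧ Function.Injective i

open Filter in
/-- The ultrapower Boolean algebra: the Boolean operations on the quotient
`Filter.Germ (U : Filter I) α` of `I → α` by `U`-a.e. equality are defined
pointwise on representatives. -/
noncomputable instance Filter.Germ.instBooleanAlgebraGerm {ι : Type u} {l : Filter ι}
    {β : Type v} [BooleanAlgebra β] : BooleanAlgebra (Germ l β) where
  __ := (inferInstance : DistribLattice (Germ l β))
  __ := (inferInstance : BoundedOrder (Germ l β))
  compl := map compl
  sdiff x y := x ⊓ (map compl y)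
  himp x y := (map compl x) ⊔ y
  inf_compl_le_bot x := inductionOn x fun f => Eventually.of_forall fun i => by simp
  top_le_sup_compl x := inductionOn x fun f => Eventually.of_forall fun i => by simp
  sdiff_eq x y := rfl
  himp_eq x y := by
    refine inductionOn₂ x y fun f g => ?_
    change (↑(fun i => (f i)ᶜ) ⊔ (g : Germ l β)) = _
    exact sup_comm _ _

open Classical in
/-- The operation of the Boolean frame `𝔅` on the powerset of `ℕ`:
`f(X) = ℕ` if `0 ∈ X`, and `f(X) = {n - 1 : n ∈ X}` otherwise. -/
noncomputable def fB (X : Set ℕ) : Set ℕ :=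
  if 0 ∈ X then Set.univ else (fun n => n - 1) '' X

open Classical in
/-- The operation `F` on `𝒫(ℕ) × 𝒫(ℕ)`: `F(a, b) = (fB a, fB b)` if `a = b`,
and `F(a, b) = (ℕ, ℕ)` otherwise. -/
noncomputable def F12 : Set ℕ × Set ℕ → Set ℕ × Set ℕ := fun p =>
  if p.1 = p.2 then (fB p.1, fB p.2) else (Set.univ, Set.univ)

namespace Stmt13

open Filter Set

abbrev A2 : Type := Set ℕ × Set ℕ

variable (U : Ultrafilter ℕ)

abbrev G := Filter.Germ (U : Filter ℕ) A2

noncomputable abbrev FF : G U → G U := Filter.Germ.map F12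

lemma fB_of_zero_mem {s : Set ℕ} (h : 0 ∈ s) : fB s = Set.univ := by
  unfold fB; rw [if_pos h]

lemma fB_of_zero_not_mem {s : Set ℕ} (h : 0 ∉ s) : fB s = (fun n => n - 1) '' s := by
  unfold fB; rw [if_neg h]

lemma mem_fB_iff {s : Set ℕ} (h : 0 ∉ s) {n : ℕ} : n ∈ fB s ↔ n + 1 ∈ s := by
  rw [fB_of_zero_not_mem h]
  constructor
  · rintro ⟨m, hm, rfl⟩
    have hm0 : m ≠ 0 := fun h0 => h (h0 ▸ hm)
    have hm1 : m - 1 + 1 = m := by omega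
    rwa [hm1]
  · intro hn
    exact ⟨n + 1, hn, by simp⟩

lemma fB_empty : fB ∅ = ∅ := by
  rw [fB_of_zero_not_mem (by simp)]; simp

lemma fB_univ : fB Set.univ = Set.univ := fB_of_zero_mem (mem_univ 0)

lemma F12_diag (s : Set ℕ) : F12 (s, s) = (fB s, fB s) := by
  unfold F12; rw [if_pos rfl]

lemma F12_off {p : A2} (h : p.1 ≠ p.2) : F12 p = (Set.univ, Set.univ) := by
  unfold F12; rw [if_neg h]

-- germ glue
lemma coe_inf (f g : ℕ → A2) :
    ((↑f : G U) ⊓ (↑g : G U)) = (↑(fun i => f i ⊓ g i) : G U) := rfl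

lemma coe_sup (f g : ℕ → A2) :
    ((↑f : G U) ⊔ (↑g : G U)) = (↑(fun i => f i ⊔ g i) : G U) := rfl

lemma coe_compl (f : ℕ → A2) :
    ((↑f : G U)ᶜ) = (↑(fun i => (f i)ᶜ) : G U) := rfl

lemma coe_bot : (⊥ : G U) = (↑((fun _ => ⊥) : ℕ → A2) : G U) := rfl

lemma coe_top : (⊤ : G U) = (↑((fun _ => ⊤) : ℕ → A2) : G U) := rfl

lemma FF_coe (f : ℕ → A2) : FF U (↑f : G U) = (↑(fun i => F12 (f i)) : G U) :=
  Filter.Germ.map_coe _ _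

lemma germ_cases (x : G U) : ∃ f : ℕ → A2, x = (↑f : G U) :=
  Filter.Germ.inductionOn x fun f => ⟨f, rfl⟩

end Stmt13
namespace Stmt13

open Filter Set

/-- the window `{n | n ≤ i ∧ i ≤ n + k}` around `i` of width `k`. -/
def wset (k i : ℕ) : Set ℕ := {n | n ≤ i ∧ i ≤ n + k}

def Wp (k : ℕ) : ℕ → A2 := fun i => (wset k i, wset k i)

def W (U : Ultrafilter ℕ) (k : ℕ) : G U := (↑(Wp k) : G U)

lemma wset_mono {k k' i : ℕ} (h : k ≤ k') : wset k i ⊆ wset k' i := by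
  intro n hn; simp only [wset, mem_setOf_eq] at *; omega

lemma W_le_W (U : Ultrafilter ℕ) {k k' : ℕ} (h : k ≤ k') : W U k ≤ W U k' := by
  rw [W, W, Filter.Germ.coe_le]
  refine Eventually.of_forall fun i => ?_
  constructor <;> exact wset_mono h

variable {U : Ultrafilter ℕ}

/-- `x` and `y` agree outside the width-`k` window. -/
def near (k : ℕ) (x y : G U) : Prop := x ⊓ (W U k)ᶜ = y ⊓ (W U k)ᶜ

/-- the congruence relation: equality modulo some window. -/
def EqJ (x y : G U) : Prop := ∃ k, near k x y

lemma near_mono {k k' : ℕ} (h : k ≤ k') {x y : G U} (hxy : near k x y) :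
    near k' x y := by
  have hw : (W U k')ᶜ = (W U k)ᶜ ⊓ (W U k')ᶜ :=
    (inf_eq_right.mpr (compl_le_compl (W_le_W U h))).symm
  unfold near at *
  rw [hw, ← inf_assoc, hxy, inf_assoc]

lemma EqJ.refl (x : G U) : EqJ x x := ⟨0, rfl⟩

lemma EqJ.symm {x y : G U} (h : EqJ x y) : EqJ y x := by
  obtain ⟨k, hk⟩ := h; exact ⟨k, hk.symm⟩

lemma EqJ.trans {x y z : G U} (h : EqJ x y) (h' : EqJ y z) : EqJ x z := by
  obtain ⟨k, hk⟩ := h; obtain ⟨k', hk'⟩ := h'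
  exact ⟨max k k', (near_mono (le_max_left _ _) hk).trans
    (near_mono (le_max_right _ _) hk')⟩

lemma EqJ.inf {x y x' y' : G U} (h : EqJ x y) (h' : EqJ x' y') :
    EqJ (x ⊓ x') (y ⊓ y') := by
  obtain ⟨k, hk⟩ := h; obtain ⟨k', hk'⟩ := h'
  refine ⟨max k k', ?_⟩
  have h1 := near_mono (le_max_left k k') hk
  have h2 := near_mono (le_max_right k k') hk'
  unfold near at *
  rw [inf_inf_distrib_right, h1, h2, ← inf_inf_distrib_right]

lemma compl_inf_eq_of_inf_eq {α : Type*} [BooleanAlgebra α] {x y w : α}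
    (h : x ⊓ w = y ⊓ w) : xᶜ ⊓ w = yᶜ ⊓ w := by
  have key : ∀ z : α, zᶜ ⊓ w = (z ⊓ w)ᶜ ⊓ w := by
    intro z
    rw [compl_inf, inf_sup_right, compl_inf_self, sup_bot_eq]
  rw [key x, key y, h]

lemma EqJ.compl {x y : G U} (h : EqJ x y) : EqJ xᶜ yᶜ := by
  obtain ⟨k, hk⟩ := h
  exact ⟨k, compl_inf_eq_of_inf_eq hk⟩

lemma EqJ.sup {x y x' y' : G U} (h : EqJ x y) (h' : EqJ x' y') :
    EqJ (x ⊔ x') (y ⊔ y') := by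
  obtain ⟨k, hk⟩ := h; obtain ⟨k', hk'⟩ := h'
  refine ⟨max k k', ?_⟩
  have h1 := near_mono (le_max_left k k') hk
  have h2 := near_mono (le_max_right k k') hk'
  unfold near at *
  rw [inf_sup_right, h1, h2, ← inf_sup_right]

end Stmt13
namespace Stmt13

open Filter Set

variable (U : Ultrafilter ℕ)

/-- diagonal germ built from a sequence of sets. -/
def diagD (a : ℕ → Set ℕ) : G U := (↑(fun i => ((a i, a i) : A2)) : G U)

/-- the diagonal subalgebra. -/
def Bdiag : Set (G U) := {x | ∃ a : ℕ → Set ℕ, x = diagD U a}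

lemma bot_diag : (⊥ : G U) = diagD U fun _ => ∅ := rfl

lemma top_diag : (⊤ : G U) = diagD U fun _ => Set.univ := rfl

lemma Bdiag_bot : (⊥ : G U) ∈ Bdiag U := ⟨_, bot_diag U⟩

lemma Bdiag_top : (⊤ : G U) ∈ Bdiag U := ⟨_, top_diag U⟩

lemma diagD_inf (a b : ℕ → Set ℕ) :
    diagD U a ⊓ diagD U b = diagD U fun i => a i ∩ b i := rfl

lemma diagD_sup (a b : ℕ → Set ℕ) :
    diagD U a ⊔ diagD U b = diagD U fun i => a i ∪ b i := rfl

lemma diagD_compl (a : ℕ → Set ℕ) :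
    (diagD U a)ᶜ = diagD U fun i => (a i)ᶜ := rfl

lemma FF_diagD (a : ℕ → Set ℕ) :
    FF U (diagD U a) = diagD U fun i => fB (a i) := by
  rw [diagD, FF_coe, diagD]
  congr 1
  funext i
  exact F12_diag (a i)

lemma Bdiag_inf {x y : G U} (hx : x ∈ Bdiag U) (hy : y ∈ Bdiag U) :
    x ⊓ y ∈ Bdiag U := by
  obtain ⟨a, rfl⟩ := hx; obtain ⟨b, rfl⟩ := hy
  exact ⟨_, diagD_inf U a b⟩

lemma Bdiag_sup {x y : G U} (hx : x ∈ Bdiag U) (hy : y ∈ Bdiag U) :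
    x ⊔ y ∈ Bdiag U := by
  obtain ⟨a, rfl⟩ := hx; obtain ⟨b, rfl⟩ := hy
  exact ⟨_, diagD_sup U a b⟩

lemma Bdiag_compl {x : G U} (hx : x ∈ Bdiag U) : xᶜ ∈ Bdiag U := by
  obtain ⟨a, rfl⟩ := hx; exact ⟨_, diagD_compl U a⟩

lemma Bdiag_FF {x : G U} (hx : x ∈ Bdiag U) : FF U x ∈ Bdiag U := by
  obtain ⟨a, rfl⟩ := hx; exact ⟨_, FF_diagD U a⟩

lemma isSubalg_Bdiag : IsSubalg (FF U) (Bdiag U) :=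
  ⟨Bdiag_bot U, fun _ hx _ hy => Bdiag_inf U hx hy, fun _ hx => Bdiag_compl U hx,
    fun _ hx => Bdiag_FF U hx⟩

/-- `near` on diagonal germs, pointwise. -/
lemma near_diag_iff {k : ℕ} {a b : ℕ → Set ℕ} :
    near k (diagD U a) (diagD U b) ↔
      ∀ᶠ i in (U : Filter ℕ), a i ∩ (wset k i)ᶜ = b i ∩ (wset k i)ᶜ := by
  unfold near W diagD
  rw [coe_compl, coe_inf, coe_inf, Filter.Germ.coe_eq]
  constructor
  · intro h
    refine h.mono fun i hi => ?_
    have := congrArg Prod.fst hi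
    simpa [Wp] using this
  · intro h
    refine h.mono fun i hi => ?_
    simp only [Wp]
    exact Prod.ext hi hi

/-- nonprincipal ultrafilters contain all cofinite sets. -/
lemma evt_lt (hU : ∀ a : ℕ, (U : Filter ℕ) ≠ pure a) (k : ℕ) :
    ∀ᶠ i in (U : Filter ℕ), k < i := by
  by_cases h : {i : ℕ | k < i} ∈ U
  · exact h
  · exfalso
    have h' : {i : ℕ | k < i}ᶜ ∈ U := Ultrafilter.compl_mem_iff_notMem.mpr h
    have hfin : ({i : ℕ | k < i}ᶜ : Set ℕ).Finite := by
      have : ({i : ℕ | k < i}ᶜ : Set ℕ) = Set.Iic k := by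
        ext n; simp
      rw [this]; exact Set.finite_Iic k
    obtain ⟨a, _, ha⟩ := Ultrafilter.eq_pure_of_finite_mem hfin h'
    exact hU a (by rw [ha, Ultrafilter.coe_pure])

/-- the key pointwise lemma: `fB` moves agreement-outside-window to a wider window. -/
lemma fB_window {k i : ℕ} (hik : k < i) {s t : Set ℕ}
    (h : s ∩ (wset k i)ᶜ = t ∩ (wset k i)ᶜ) :
    fB s ∩ (wset (k + 1) i)ᶜ = fB t ∩ (wset (k + 1) i)ᶜ := by
  have h' : ∀ n, n ∉ wset k i → (n ∈ s ↔ n ∈ t) := by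
    intro n hn
    have := Set.ext_iff.mp h n
    simp only [Set.mem_inter_iff, Set.mem_compl_iff] at this
    tauto
  have h0 : (0 : ℕ) ∉ wset k i := by
    simp only [wset, mem_setOf_eq]; omega
  by_cases hs : 0 ∈ s
  · rw [fB_of_zero_mem hs, fB_of_zero_mem ((h' 0 h0).mp hs)]
  · have ht : 0 ∉ t := fun c => hs ((h' 0 h0).mpr c)
    ext n
    simp only [Set.mem_inter_iff, Set.mem_compl_iff]
    refine and_congr_left fun hw => ?_
    rw [mem_fB_iff hs, mem_fB_iff ht]
    refine h' (n + 1) fun hn1 => hw ?_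
    simp only [wset, mem_setOf_eq] at hn1 ⊢
    omega

/-- `EqJ` is compatible with `FF` on diagonal germs.  Needs nonprincipality. -/
lemma EqJ_map {U : Ultrafilter ℕ} (hU : ∀ a : ℕ, (U : Filter ℕ) ≠ pure a) {x y : G U}
    (hx : x ∈ Bdiag U) (hy : y ∈ Bdiag U) (h : EqJ x y) :
    EqJ (FF U x) (FF U y) := by
  obtain ⟨a, rfl⟩ := hx; obtain ⟨b, rfl⟩ := hy
  obtain ⟨k, hk⟩ := h
  rw [near_diag_iff] at hk
  refine ⟨k + 1, ?_⟩
  rw [FF_diagD, FF_diagD, near_diag_iff]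
  filter_upwards [hk, evt_lt U hU k] with i hi hki
  exact fB_window hki hi

/-- the congruence on the diagonal subalgebra. -/
def Th (x y : G U) : Prop := x ∈ Bdiag U ∧ y ∈ Bdiag U ∧ EqJ x y

lemma isCongrOn_Th (hU : ∀ a : ℕ, (U : Filter ℕ) ≠ pure a) :
    IsCongrOn (FF U) (Bdiag U) (Th U) where
  dom h := ⟨h.1, h.2.1⟩
  refl x hx := ⟨hx, hx, EqJ.refl x⟩
  symm h := ⟨h.2.1, h.1, EqJ.symm h.2.2⟩
  trans h h' := ⟨h.1, h'.2.1, EqJ.trans h.2.2 h'.2.2⟩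
  inf h h' := ⟨Bdiag_inf U h.1 h'.1, Bdiag_inf U h.2.1 h'.2.1, EqJ.inf h.2.2 h'.2.2⟩
  compl h := ⟨Bdiag_compl U h.1, Bdiag_compl U h.2.1, EqJ.compl h.2.2⟩
  map h := ⟨Bdiag_FF U h.1, Bdiag_FF U h.2.1, EqJ_map hU h.1 h.2.1 h.2.2⟩

end Stmt13
namespace Stmt13

open Filter Set

variable (U : Ultrafilter ℕ)

lemma bot_A2 : (⊥ : A2) = ((∅ : Set ℕ), (∅ : Set ℕ)) := rfl

lemma top_A2 : (⊤ : A2) = (Set.univ, Set.univ) := rfl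

lemma FF_bot : FF U (⊥ : G U) = ⊥ := by
  rw [coe_bot, FF_coe, Filter.Germ.coe_eq]
  refine Filter.Eventually.of_forall fun i => ?_
  show F12 ⊥ = ⊥
  rw [bot_A2, F12_diag, fB_empty]

lemma FF_top : FF U (⊤ : G U) = ⊤ := by
  rw [coe_top, FF_coe, Filter.Germ.coe_eq]
  refine Filter.Eventually.of_forall fun i => ?_
  show F12 ⊤ = ⊤
  rw [top_A2, F12_diag, fB_univ]

lemma not_hasCEP (hU : ∀ a : ℕ, (U : Filter ℕ) ≠ pure a) : ¬ HasCEP (FF U) := by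
  intro h
  obtain ⟨Ψ, hΨ, hext⟩ := h (Bdiag U) (isSubalg_Bdiag U) (Th U) (isCongrOn_Th U hU)
  have hThe : Th U (diagD U fun i => {i}) ⊥ := by
    refine ⟨⟨_, rfl⟩, Bdiag_bot U, ⟨0, ?_⟩⟩
    rw [bot_diag U, near_diag_iff]
    refine Eventually.of_forall fun i => ?_
    ext n
    simp only [mem_inter_iff, mem_compl_iff, wset, mem_setOf_eq, mem_singleton_iff,
      mem_empty_iff_false, false_and, iff_false, not_and, not_not]
    omega
  have hΨ1 : Ψ (diagD U fun i => {i}) ⊥ := ((hext _ _).mp hThe).1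
  have hΨ2 := hΨ.inf hΨ1 (hΨ.refl (↑((fun _ => (Set.univ, ∅)) : ℕ → A2) : G U))
  rw [bot_inf_eq] at hΨ2
  have he1 : (diagD U fun i => {i}) ⊓ (↑((fun _ => (Set.univ, ∅)) : ℕ → A2) : G U)
      = (↑((fun i => (({i} : Set ℕ), (∅ : Set ℕ))) : ℕ → A2) : G U) := by
    rw [diagD, coe_inf]
    congr 1
    funext i
    refine Prod.ext ?_ ?_ <;> simp
  rw [he1] at hΨ2
  have hΨ3 := hΨ.map hΨ2
  have hFtop : FF U (↑((fun i => (({i} : Set ℕ), (∅ : Set ℕ))) : ℕ → A2) : G U) = ⊤ := by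
    rw [FF_coe, coe_top, Filter.Germ.coe_eq]
    refine Filter.Eventually.of_forall fun i => ?_
    show F12 ({i}, ∅) = ⊤
    rw [F12_off (Set.singleton_ne_empty i), top_A2]
  rw [hFtop, FF_bot] at hΨ3
  have hTh2 : Th U ⊤ ⊥ := (hext ⊤ ⊥).mpr ⟨hΨ3, Bdiag_top U, Bdiag_bot U⟩
  obtain ⟨k, hk⟩ := hTh2.2.2
  rw [top_diag U, bot_diag U, near_diag_iff] at hk
  obtain ⟨i, hi⟩ := hk.exists
  have h2 := Set.ext_iff.mp hi (i + k + 1)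
  simp only [mem_inter_iff, mem_compl_iff, mem_univ, true_and, mem_empty_iff_false,
    false_and, iff_false, wset, mem_setOf_eq, not_not] at h2
  omega

end Stmt13
namespace Stmt13

open Filter Set

variable (U : Ultrafilter ℕ)

/-- the "tail" element `[i ↦ [i+1, ∞))`, a nontrivial fixed point of `FF` modulo `EqJ`. -/
def tG : G U := diagD U fun i => {n | i + 1 ≤ n}

lemma diagD_congr {a b : ℕ → Set ℕ} (h : ∀ i, a i = b i) : diagD U a = diagD U b := by
  unfold diagD
  rw [Filter.Germ.coe_eq]
  exact Eventually.of_forall fun i => by show (a i, a i) = (b i, b i); rw [h i]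

lemma tG_compl : (tG U)ᶜ = diagD U fun i => {n | n ≤ i} := by
  rw [tG, diagD_compl]
  refine diagD_congr U fun i => ?_
  ext n; simp only [mem_compl_iff, mem_setOf_eq]; omega

lemma tG_mem : tG U ∈ Bdiag U := ⟨_, rfl⟩

lemma tG_compl_mem : (tG U)ᶜ ∈ Bdiag U := Bdiag_compl U (tG_mem U)

lemma FF_tG_compl : FF U (tG U)ᶜ = ⊤ := by
  rw [tG_compl, FF_diagD, top_diag]
  refine diagD_congr U fun i => ?_
  rw [fB_of_zero_mem (by simp)]

lemma EqJ_FF_tG : EqJ (FF U (tG U)) (tG U) := by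
  rw [tG, FF_diagD]
  have h1 : ∀ i, fB {n | i + 1 ≤ n} = {n | i ≤ n} := by
    intro i
    have h0 : (0 : ℕ) ∉ {n | i + 1 ≤ n} := by simp
    ext n
    rw [mem_fB_iff h0]
    simp only [mem_setOf_eq]
    omega
  rw [diagD_congr U h1]
  refine ⟨1, ?_⟩
  rw [near_diag_iff]
  refine Eventually.of_forall fun i => ?_
  ext n
  simp only [mem_inter_iff, mem_compl_iff, mem_setOf_eq, wset]
  omega

lemma not_EqJ_diag (hU : ∀ a : ℕ, (U : Filter ℕ) ≠ pure a) {a b : ℕ → Set ℕ}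
    (hw : ∀ i k, k < i → ∃ n, n ∉ wset k i ∧ ¬ ((n ∈ a i) ↔ (n ∈ b i))) :
    ¬ EqJ (diagD U a) (diagD U b) := by
  rintro ⟨k, hk⟩
  rw [near_diag_iff] at hk
  obtain ⟨i, hi, hik⟩ := (hk.and (evt_lt U hU k)).exists
  obtain ⟨n, hn1, hn2⟩ := hw i k hik
  have h2 := Set.ext_iff.mp hi n
  simp only [mem_inter_iff, mem_compl_iff] at h2
  tauto

variable {U}

lemma nEq_bot_t (hU : ∀ a : ℕ, (U : Filter ℕ) ≠ pure a) : ¬ EqJ (⊥ : G U) (tG U) := by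
  rw [bot_diag, tG]
  refine not_EqJ_diag U hU fun i k hik => ⟨i + k + 1, ?_, ?_⟩
  · simp only [wset, mem_setOf_eq]; omega
  · simp only [mem_empty_iff_false, mem_setOf_eq]
    intro hc; exact hc.mpr (by omega)

lemma nEq_bot_tc (hU : ∀ a : ℕ, (U : Filter ℕ) ≠ pure a) : ¬ EqJ (⊥ : G U) (tG U)ᶜ := by
  rw [bot_diag, tG_compl]
  refine not_EqJ_diag U hU fun i k hik => ⟨0, ?_, ?_⟩
  · simp only [wset, mem_setOf_eq]; omega
  · simp only [mem_empty_iff_false, mem_setOf_eq]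
    intro hc; exact hc.mpr (by omega)

lemma nEq_bot_top (hU : ∀ a : ℕ, (U : Filter ℕ) ≠ pure a) : ¬ EqJ (⊥ : G U) ⊤ := by
  rw [bot_diag, top_diag]
  refine not_EqJ_diag U hU fun i k hik => ⟨i + k + 1, ?_, ?_⟩
  · simp only [wset, mem_setOf_eq]; omega
  · simp only [mem_empty_iff_false, mem_univ]
    intro hc; exact hc.mpr trivial

lemma nEq_t_tc (hU : ∀ a : ℕ, (U : Filter ℕ) ≠ pure a) : ¬ EqJ (tG U) (tG U)ᶜ := by
  rw [tG_compl, tG]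
  refine not_EqJ_diag U hU fun i k hik => ⟨i + k + 1, ?_, ?_⟩
  · simp only [wset, mem_setOf_eq]; omega
  · simp only [mem_setOf_eq]
    intro hc; have := hc.mp (by omega); omega

lemma nEq_t_top (hU : ∀ a : ℕ, (U : Filter ℕ) ≠ pure a) : ¬ EqJ (tG U) ⊤ := by
  rw [tG, top_diag]
  refine not_EqJ_diag U hU fun i k hik => ⟨0, ?_, ?_⟩
  · simp only [wset, mem_setOf_eq]; omega
  · simp only [mem_setOf_eq, mem_univ]
    intro hc; have := hc.mpr trivial; omega

lemma nEq_tc_top (hU : ∀ a : ℕ, (U : Filter ℕ) ≠ pure a) : ¬ EqJ (tG U)ᶜ ⊤ := by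
  rw [tG_compl, top_diag]
  refine not_EqJ_diag U hU fun i k hik => ⟨i + k + 1, ?_, ?_⟩
  · simp only [wset, mem_setOf_eq]; omega
  · simp only [mem_setOf_eq, mem_univ]
    intro hc; have := hc.mpr trivial; omega

end Stmt13
namespace Stmt13

open Filter Set

variable {U : Ultrafilter ℕ}

lemma EqJ_unique {x u v : G U} (h1 : EqJ x u) (h2 : EqJ x v) : EqJ u v :=
  (EqJ.symm h1).trans h2

/-- membership in one of the four classes `⊥, t, tᶜ, ⊤` modulo `EqJ`. -/
def Kcl (x : G U) : Prop :=
  EqJ x ⊥ ∨ EqJ x (tG U) ∨ EqJ x (tG U)ᶜ ∨ EqJ x ⊤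

lemma Kcl_inf {x y : G U} (hx : Kcl x) (hy : Kcl y) : Kcl (x ⊓ y) := by
  unfold Kcl at *
  rcases hx with h1|h1|h1|h1 <;> rcases hy with h2|h2|h2|h2 <;>
    (have h3 := EqJ.inf h1 h2
     simp only [bot_inf_eq, inf_bot_eq, top_inf_eq, inf_top_eq, inf_idem,
       inf_compl_self, compl_inf_self] at h3
     tauto)

lemma Kcl_sup {x y : G U} (hx : Kcl x) (hy : Kcl y) : Kcl (x ⊔ y) := by
  unfold Kcl at *
  rcases hx with h1|h1|h1|h1 <;> rcases hy with h2|h2|h2|h2 <;>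
    (have h3 := EqJ.sup h1 h2
     simp only [bot_sup_eq, sup_bot_eq, top_sup_eq, sup_top_eq, sup_idem,
       sup_compl_eq_top, compl_sup_eq_top] at h3
     tauto)

lemma Kcl_compl {x : G U} (hx : Kcl x) : Kcl xᶜ := by
  unfold Kcl at *
  rcases hx with h1|h1|h1|h1 <;>
    (have h3 := EqJ.compl h1
     simp (failIfUnchanged := false) only [compl_bot, compl_top, compl_compl] at h3
     tauto)

lemma Kcl_FF (hU : ∀ a : ℕ, (U : Filter ℕ) ≠ pure a) {x : G U}
    (hxB : x ∈ Bdiag U) (hx : Kcl x) : Kcl (FF U x) := by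
  rcases hx with h1|h1|h1|h1
  · refine Or.inl ?_
    have := EqJ_map hU hxB (Bdiag_bot U) h1
    rwa [FF_bot] at this
  · refine Or.inr (Or.inl ?_)
    exact (EqJ_map hU hxB (tG_mem U) h1).trans (EqJ_FF_tG U)
  · refine Or.inr (Or.inr (Or.inr ?_))
    have := EqJ_map hU hxB (tG_compl_mem U) h1
    rwa [FF_tG_compl] at this
  · refine Or.inr (Or.inr (Or.inr ?_))
    have := EqJ_map hU hxB (Bdiag_top U) h1
    rwa [FF_top] at this

variable (U)

/-- the subalgebra: diagonal elements lying in one of the four classes. -/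
def K : Set (G U) := {x | x ∈ Bdiag U ∧ Kcl x}

/-- the subalgebra, as a type. -/
def Kt : Type := {x : G U // x ∈ K U}

namespace Kt

noncomputable instance : Max (Kt U) :=
  ⟨fun x y => ⟨x.1 ⊔ y.1, Bdiag_sup U x.2.1 y.2.1, Kcl_sup x.2.2 y.2.2⟩⟩

noncomputable instance : Min (Kt U) :=
  ⟨fun x y => ⟨x.1 ⊓ y.1, Bdiag_inf U x.2.1 y.2.1, Kcl_inf x.2.2 y.2.2⟩⟩

noncomputable instance : Top (Kt U) := ⟨⟨⊤, Bdiag_top U, Or.inr (Or.inr (Or.inr (EqJ.refl ⊤)))⟩⟩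

noncomputable instance : Bot (Kt U) := ⟨⟨⊥, Bdiag_bot U, Or.inl (EqJ.refl ⊥)⟩⟩

noncomputable instance : Compl (Kt U) :=
  ⟨fun x => ⟨x.1ᶜ, Bdiag_compl U x.2.1, Kcl_compl x.2.2⟩⟩

noncomputable instance : SDiff (Kt U) :=
  ⟨fun x y => ⟨x.1 \ y.1, by
    rw [_root_.sdiff_eq]
    exact ⟨Bdiag_inf U x.2.1 (Bdiag_compl U y.2.1), Kcl_inf x.2.2 (Kcl_compl y.2.2)⟩⟩⟩

noncomputable instance : HImp (Kt U) :=
  ⟨fun x y => ⟨x.1 ⇨ y.1, by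
    rw [himp_eq]
    exact ⟨Bdiag_sup U y.2.1 (Bdiag_compl U x.2.1), Kcl_sup y.2.2 (Kcl_compl x.2.2)⟩⟩⟩

instance : LE (Kt U) := ⟨fun x y => x.1 ≤ y.1⟩

instance : LT (Kt U) := ⟨fun x y => x.1 < y.1⟩

noncomputable instance : BooleanAlgebra (Kt U) :=
  Function.Injective.booleanAlgebra (fun x : Kt U => x.1) Subtype.coe_injective Iff.rfl Iff.rfl
    (fun _ _ => rfl) (fun _ _ => rfl) rfl rfl (fun _ => rfl) (fun _ _ => rfl) (fun _ _ => rfl)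

end Kt

/-- the restriction of the ultrapower operation to the subalgebra. -/
noncomputable def hKt (hU : ∀ a : ℕ, (U : Filter ℕ) ≠ pure a) : Kt U → Kt U :=
  fun x => ⟨FF U x.1, Bdiag_FF U x.2.1, Kcl_FF hU x.2.1 x.2.2⟩

/-- the 4-element Boolean frame that witnesses `HS ≠ SH`. -/
def gB : Bool × Bool → Bool × Bool := fun p => (p.1 || p.2, p.2)

/-- the canonical representatives of the four classes. -/
noncomputable def emb : Bool × Bool → G U := fun p =>
  (if p.1 then tG U else ⊥) ⊔ (if p.2 then (tG U)ᶜ else ⊥)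

lemma emb_ff : emb U (false, false) = ⊥ := by simp [emb]
lemma emb_tf : emb U (true, false) = tG U := by simp [emb]
lemma emb_ft : emb U (false, true) = (tG U)ᶜ := by simp [emb]
lemma emb_tt : emb U (true, true) = ⊤ := by simp [emb, sup_compl_eq_top]

lemma emb_mem : ∀ p, emb U p ∈ K U := by
  rintro ⟨p1, p2⟩
  cases p1 <;> cases p2
  · rw [emb_ff]; exact ⟨Bdiag_bot U, Or.inl (EqJ.refl _)⟩
  · rw [emb_ft]; exact ⟨tG_compl_mem U, Or.inr (Or.inr (Or.inl (EqJ.refl _)))⟩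
  · rw [emb_tf]; exact ⟨tG_mem U, Or.inr (Or.inl (EqJ.refl _))⟩
  · rw [emb_tt]; exact ⟨Bdiag_top U, Or.inr (Or.inr (Or.inr (EqJ.refl _)))⟩

variable {U}

lemma emb_inj (hU : ∀ a : ℕ, (U : Filter ℕ) ≠ pure a) :
    ∀ {p q}, EqJ (emb U p) (emb U q) → p = q := by
  rintro ⟨p1, p2⟩ ⟨q1, q2⟩ h
  cases p1 <;> cases p2 <;> cases q1 <;> cases q2 <;>
    simp only [emb_ff, emb_tf, emb_ft, emb_tt] at h <;>
    first
      | rfl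
      | exact absurd h (nEq_bot_t hU)
      | exact absurd h.symm (nEq_bot_t hU)
      | exact absurd h (nEq_bot_tc hU)
      | exact absurd h.symm (nEq_bot_tc hU)
      | exact absurd h (nEq_bot_top hU)
      | exact absurd h.symm (nEq_bot_top hU)
      | exact absurd h (nEq_t_tc hU)
      | exact absurd h.symm (nEq_t_tc hU)
      | exact absurd h (nEq_t_top hU)
      | exact absurd h.symm (nEq_t_top hU)
      | exact absurd h (nEq_tc_top hU)
      | exact absurd h.symm (nEq_tc_top hU)

lemma emb_inf : ∀ p q, emb U (p ⊓ q) = emb U p ⊓ emb U q := by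
  rintro ⟨p1, p2⟩ ⟨q1, q2⟩
  cases p1 <;> cases p2 <;> cases q1 <;> cases q2 <;>
    simp only [show ∀ a b c d : Bool, ((a,b) ⊓ (c,d) : Bool × Bool) = (a && c, b && d)
        from fun a b c d => rfl] <;>
    simp only [Bool.and_self, Bool.and_false, Bool.false_and, Bool.and_true, Bool.true_and,
      emb_ff, emb_tf, emb_ft, emb_tt] <;>
    simp [inf_compl_self, compl_inf_self]

lemma emb_compl : ∀ p, emb U pᶜ = (emb U p)ᶜ := by
  rintro ⟨p1, p2⟩
  cases p1 <;> cases p2 <;>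
    simp only [show ∀ a b : Bool, ((a,b)ᶜ : Bool × Bool) = (!a, !b) from fun a b => rfl] <;>
    simp only [Bool.not_true, Bool.not_false, emb_ff, emb_tf, emb_ft, emb_tt] <;>
    simp

lemma emb_FF (hU : ∀ a : ℕ, (U : Filter ℕ) ≠ pure a) :
    ∀ p, EqJ (FF U (emb U p)) (emb U (gB p)) := by
  rintro ⟨p1, p2⟩
  cases p1 <;> cases p2
  · rw [emb_ff, FF_bot]; show EqJ _ (emb U (false, false)); rw [emb_ff]; exact EqJ.refl _
  · rw [emb_ft, FF_tG_compl]; show EqJ _ (emb U (true, true)); rw [emb_tt]; exact EqJ.refl _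
  · rw [emb_tf]; show EqJ _ (emb U (true, false)); rw [emb_tf]; exact EqJ_FF_tG U
  · rw [emb_tt, FF_top]; show EqJ _ (emb U (true, true)); rw [emb_tt]; exact EqJ.refl _

open Classical in
/-- classification map onto the 4-element algebra. -/
noncomputable def sK : Kt U → Bool × Bool := fun x =>
  if EqJ x.1 ⊥ then (false, false)
  else if EqJ x.1 (tG U) then (true, false)
  else if EqJ x.1 (tG U)ᶜ then (false, true)
  else (true, true)

lemma sK_classify (hU : ∀ a : ℕ, (U : Filter ℕ) ≠ pure a) (x : Kt U) :
    EqJ x.1 (emb U (sK x)) := by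
  unfold sK
  split_ifs with h1 h2 h3
  · rwa [emb_ff]
  · rwa [emb_tf]
  · rwa [emb_ft]
  · rw [emb_tt]
    rcases x.2.2 with h|h|h|h
    · exact absurd h h1
    · exact absurd h h2
    · exact absurd h h3
    · exact h

lemma sK_inf (hU : ∀ a : ℕ, (U : Filter ℕ) ≠ pure a) (x y : Kt U) :
    sK (x ⊓ y) = sK x ⊓ sK y := by
  apply emb_inj hU
  refine EqJ_unique (sK_classify hU (x ⊓ y)) ?_
  rw [emb_inf]
  exact EqJ.inf (sK_classify hU x) (sK_classify hU y)

lemma sK_compl (hU : ∀ a : ℕ, (U : Filter ℕ) ≠ pure a) (x : Kt U) :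
    sK xᶜ = (sK x)ᶜ := by
  apply emb_inj hU
  refine EqJ_unique (sK_classify hU xᶜ) ?_
  rw [emb_compl]
  exact EqJ.compl (sK_classify hU x)

lemma sK_bot (hU : ∀ a : ℕ, (U : Filter ℕ) ≠ pure a) :
    sK (⊥ : Kt U) = ⊥ := by
  have h1 : EqJ (⊥ : Kt U).1 (emb U (sK (⊥ : Kt U))) := sK_classify hU ⊥
  have h2 : (⊥ : Kt U).1 = emb U (false, false) := by rw [emb_ff]; rfl
  rw [h2] at h1
  have := emb_inj hU h1
  show sK (⊥ : Kt U) = ((false, false) : Bool × Bool)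
  exact this.symm

lemma sK_map (hU : ∀ a : ℕ, (U : Filter ℕ) ≠ pure a) (x : Kt U) :
    sK (hKt U hU x) = gB (sK x) := by
  apply emb_inj hU
  refine EqJ_unique (sK_classify hU (hKt U hU x)) ?_
  have h1 : EqJ (FF U x.1) (FF U (emb U (sK x))) :=
    EqJ_map hU x.2.1 (emb_mem U (sK x)).1 (sK_classify hU x)
  exact h1.trans (emb_FF hU (sK x))

lemma sK_surj (hU : ∀ a : ℕ, (U : Filter ℕ) ≠ pure a) :
    Function.Surjective (sK : Kt U → Bool × Bool) := by
  intro p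
  refine ⟨⟨emb U p, emb_mem U p⟩, ?_⟩
  have h1 := sK_classify hU (⟨emb U p, emb_mem U p⟩ : Kt U)
  exact (emb_inj hU h1).symm

/-- `(Bool × Bool, gB)` is in `HS` of the ultrapower. -/
lemma memHS (hU : ∀ a : ℕ, (U : Filter ℕ) ≠ pure a) :
    MemHS (FF U) gB := by
  refine ⟨Kt U, inferInstance, hKt U hU, fun x => x.1, sK,
    ⟨rfl, fun _ _ => rfl, fun _ => rfl, fun _ => rfl⟩, Subtype.coe_injective,
    ⟨sK_bot hU, sK_inf hU, sK_compl hU, sK_map hU⟩, sK_surj hU⟩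

end Stmt13
namespace Stmt13

open Filter Set

variable (U : Ultrafilter ℕ)

lemma fB_fixed {s : Set ℕ} (h : fB s = s) : s = ∅ ∨ s = Set.univ := by
  by_cases h0 : 0 ∈ s
  · right; rw [← fB_of_zero_mem h0, h]
  · left
    have key : ∀ n, n ∉ s := by
      intro n
      induction n using Nat.strong_induction_on with
      | _ n ih =>
        intro hn
        match n, hn with
        | 0, hn => exact h0 hn
        | (m+1), hn =>
          have hm : m ∈ fB s := (mem_fB_iff h0).mpr hn
          rw [h] at hm
          exact ih m (Nat.lt_succ_self m) hm
    ext n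
    simp [key n]

lemma F12_fixed {p : A2} (h : F12 p = p) : p = ⊥ ∨ p = ⊤ := by
  obtain ⟨s, t⟩ := p
  by_cases h12 : s = t
  · subst h12
    rw [F12_diag] at h
    have h1 : fB s = s := congrArg Prod.fst h
    rcases fB_fixed h1 with h2|h2
    · left; rw [h2]; rfl
    · right; rw [h2]; rfl
  · rw [F12_off h12] at h
    exact absurd ((congrArg Prod.fst h).symm.trans (congrArg Prod.snd h)) h12

lemma FF_fixed {x : G U} (h : FF U x = x) : x = ⊥ ∨ x = ⊤ := by
  obtain ⟨f, rfl⟩ := germ_cases U x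
  rw [FF_coe, Filter.Germ.coe_eq] at h
  by_cases hT : {i | f i = ⊤} ∈ U
  · right
    rw [coe_top, Filter.Germ.coe_eq]
    have hT' : ∀ᶠ i in (U : Filter ℕ), f i = ⊤ := hT
    filter_upwards [hT'] with i hi
    exact hi
  · left
    have hTc : {i | f i = ⊤}ᶜ ∈ U := Ultrafilter.compl_mem_iff_notMem.mpr hT
    rw [coe_bot, Filter.Germ.coe_eq]
    have hTc' : ∀ᶠ i in (U : Filter ℕ), ¬ f i = ⊤ := hTc
    filter_upwards [h, hTc'] with i h1 h2
    rcases F12_fixed h1 with h3|h3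
    · exact h3
    · exact absurd h3 h2

lemma hom_ker_top_bot {γ : Type} [BooleanAlgebra γ] {hop : γ → γ} {s : G U → γ}
    (hs : IsHom (FF U) hop s) (hne : ¬ Function.Injective s) : s ⊤ = s ⊥ := by
  obtain ⟨x, y, hxy, hne2⟩ := Function.not_injective_iff.mp hne
  obtain ⟨hbot, hinf, hcompl, hmap⟩ := hs
  have ker_inf : ∀ {a b c d : G U}, s a = s b → s c = s d → s (a ⊓ c) = s (b ⊓ d) := by
    intro a b c d h1 h2; rw [hinf, hinf, h1, h2]
  have ker_sup : ∀ {a b c d : G U}, s a = s b → s c = s d → s (a ⊔ c) = s (b ⊔ d) := by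
    intro a b c d h1 h2
    have e : ∀ u v : G U, u ⊔ v = (uᶜ ⊓ vᶜ)ᶜ := by
      intro u v; rw [compl_inf, compl_compl, compl_compl]
    have f : ∀ u v : G U, s (u ⊔ v) = ((s u)ᶜ ⊓ (s v)ᶜ)ᶜ := by
      intro u v
      rw [e, hcompl, hinf, hcompl, hcompl]
    rw [f, f, h1, h2]
  have h1 : s (x ⊓ yᶜ) = s ⊥ := by
    have h' := ker_inf hxy (rfl : s yᶜ = s yᶜ)
    rwa [inf_compl_self] at h'
  have h2 : s (y ⊓ xᶜ) = s ⊥ := by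
    have h' := ker_inf hxy.symm (rfl : s xᶜ = s xᶜ)
    rwa [inf_compl_self] at h'
  have h3 : s ((x ⊓ yᶜ) ⊔ (y ⊓ xᶜ)) = s ⊥ := by
    have h' := ker_sup h1 h2
    rwa [sup_idem] at h'
  have hdne : (x ⊓ yᶜ) ⊔ (y ⊓ xᶜ) ≠ ⊥ := by
    intro hc
    apply hne2
    have hc1 := sup_eq_bot_iff.mp hc
    have hx1 : x \ y = ⊥ := by rw [_root_.sdiff_eq]; exact hc1.1
    have hy1 : y \ x = ⊥ := by rw [_root_.sdiff_eq]; exact hc1.2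
    exact le_antisymm (sdiff_eq_bot_iff.mp hx1) (sdiff_eq_bot_iff.mp hy1)
  obtain ⟨c, hc⟩ := germ_cases U ((x ⊓ yᶜ) ⊔ (y ⊓ xᶜ))
  have hz1 : (x ⊓ yᶜ) ⊔ (y ⊓ xᶜ) ⊓ (↑((fun _ => (Set.univ, ∅)) : ℕ → A2) : G U) = ⊥ → True := fun _ => trivial
  -- define the two one-sided parts
  have hsplit : ((x ⊓ yᶜ) ⊔ (y ⊓ xᶜ))
      = (↑((fun i => (((c i).1, ∅) : A2)) : ℕ → A2) : G U)
        ⊔ (↑((fun i => ((∅, (c i).2) : A2)) : ℕ → A2) : G U) := by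
    rw [hc, coe_sup, Filter.Germ.coe_eq]
    refine Eventually.of_forall fun i => ?_
    show c i = ((c i).1 ∪ ∅, ∅ ∪ (c i).2)
    refine Prod.ext ?_ ?_ <;> simp
  have hz1eq : ((x ⊓ yᶜ) ⊔ (y ⊓ xᶜ)) ⊓ (↑((fun _ => (Set.univ, ∅)) : ℕ → A2) : G U)
      = (↑((fun i => (((c i).1, ∅) : A2)) : ℕ → A2) : G U) := by
    rw [hc, coe_inf, Filter.Germ.coe_eq]
    refine Eventually.of_forall fun i => ?_
    show c i ⊓ (Set.univ, ∅) = ((c i).1, ∅)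
    refine Prod.ext ?_ ?_ <;> simp
  have hz2eq : ((x ⊓ yᶜ) ⊔ (y ⊓ xᶜ)) ⊓ (↑((fun _ => (∅, Set.univ)) : ℕ → A2) : G U)
      = (↑((fun i => ((∅, (c i).2) : A2)) : ℕ → A2) : G U) := by
    rw [hc, coe_inf, Filter.Germ.coe_eq]
    refine Eventually.of_forall fun i => ?_
    show c i ⊓ (∅, Set.univ) = (∅, (c i).2)
    refine Prod.ext ?_ ?_ <;> simp
  have hsz1 : s (↑((fun i => (((c i).1, ∅) : A2)) : ℕ → A2) : G U) = s ⊥ := by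
    rw [← hz1eq]
    have h' := ker_inf h3 (rfl : s (↑((fun _ => (Set.univ, ∅)) : ℕ → A2) : G U) = _)
    rwa [bot_inf_eq] at h'
  have hsz2 : s (↑((fun i => ((∅, (c i).2) : A2)) : ℕ → A2) : G U) = s ⊥ := by
    rw [← hz2eq]
    have h' := ker_inf h3 (rfl : s (↑((fun _ => (∅, Set.univ)) : ℕ → A2) : G U) = _)
    rwa [bot_inf_eq] at h'
  have hcase : (↑((fun i => (((c i).1, ∅) : A2)) : ℕ → A2) : G U) ≠ ⊥
      ∨ (↑((fun i => ((∅, (c i).2) : A2)) : ℕ → A2) : G U) ≠ ⊥ := by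
    by_contra hcon
    push_neg at hcon
    apply hdne
    rw [hsplit, hcon.1, hcon.2, sup_idem]
  have hfinish : ∀ z : G U, FF U z = ⊤ → s z = s ⊥ → s ⊤ = s ⊥ := by
    intro z hz hsz
    calc s ⊤ = s (FF U z) := by rw [hz]
      _ = hop (s z) := hmap z
      _ = hop (s ⊥) := by rw [hsz]
      _ = s (FF U ⊥) := (hmap ⊥).symm
      _ = s ⊥ := by rw [FF_bot]
  rcases hcase with hz|hz
  · refine hfinish _ ?_ hsz1
    rw [FF_coe, coe_top, Filter.Germ.coe_eq]
    have h4 : ¬ (∀ᶠ i in (U : Filter ℕ), (((c i).1, ∅) : A2) = ⊥) := by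
      intro hcon
      exact hz (by rw [coe_bot, Filter.Germ.coe_eq]; exact hcon)
    have h5 : ∀ᶠ i in (U : Filter ℕ), ¬ ((((c i).1, ∅) : A2) = ⊥) :=
      (Ultrafilter.frequently_iff_eventually.mp (Filter.not_eventually.mp h4))
    filter_upwards [h5] with i hi
    show F12 ((c i).1, ∅) = ⊤
    have hne' : ((c i).1 : Set ℕ) ≠ ∅ := fun hc2 => hi (by rw [bot_A2, hc2])
    rw [F12_off hne', top_A2]
  · refine hfinish _ ?_ hsz2
    rw [FF_coe, coe_top, Filter.Germ.coe_eq]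
    have h4 : ¬ (∀ᶠ i in (U : Filter ℕ), ((∅, (c i).2) : A2) = ⊥) := by
      intro hcon
      exact hz (by rw [coe_bot, Filter.Germ.coe_eq]; exact hcon)
    have h5 : ∀ᶠ i in (U : Filter ℕ), ¬ (((∅, (c i).2) : A2) = ⊥) :=
      (Ultrafilter.frequently_iff_eventually.mp (Filter.not_eventually.mp h4))
    filter_upwards [h5] with i hi
    show F12 (∅, (c i).2) = ⊤
    have hne' : (∅ : Set ℕ) ≠ (c i).2 := fun hc2 => hi (by rw [bot_A2, ← hc2])
    rw [F12_off hne', top_A2]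

lemma notSH (hU : ∀ a : ℕ, (U : Filter ℕ) ≠ pure a) : ¬ MemSH (FF U) gB := by
  rintro ⟨γ', iγ', hop, s, i, hs, hssurj, hi, hiinj⟩
  letI := iγ'
  have hi_bot : i ⊥ = ⊥ := hi.1
  have hi_top : i ⊤ = ⊤ := by
    have h' : i (⊥ : Bool × Bool)ᶜ = (i ⊥)ᶜ := hi.2.2.1 ⊥
    rwa [compl_bot, hi_bot, compl_bot] at h'
  have hs_bot : s ⊥ = ⊥ := hs.1
  have hs_top : s ⊤ = ⊤ := by
    have h' : s (⊥ : G U)ᶜ = (s ⊥)ᶜ := hs.2.2.1 ⊥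
    rwa [compl_bot, hs_bot, compl_bot] at h'
  by_cases hinj : Function.Injective s
  · obtain ⟨y, hy⟩ := hssurj (i (true, false))
    have h1 : s (FF U y) = s y := by
      rw [hs.2.2.2 y, hy]
      have h2 : i (gB (true, false)) = hop (i (true, false)) := hi.2.2.2 (true, false)
      have h3 : gB (true, false) = (true, false) := rfl
      rw [h3] at h2
      exact h2.symm
    have h2 : FF U y = y := hinj h1
    rcases FF_fixed U h2 with h3|h3
    · rw [h3] at hy
      rw [hs_bot, ← hi_bot] at hy
      have := hiinj hy.symm
      exact absurd this (by decide)
    · rw [h3] at hy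
      rw [hs_top, ← hi_top] at hy
      have := hiinj hy.symm
      exact absurd this (by decide)
  · have hker : s ⊤ = s ⊥ := hom_ker_top_bot U hs hinj
    rw [hs_top, hs_bot] at hker
    have : i ⊤ = i ⊥ := by rw [hi_top, hi_bot, hker]
    have h2 := hiinj this
    exact absurd h2 (by decide)

end Stmt13
/-- for a nonprincipal ultrafilter `U` on `ℕ`, the ultrapower `𝔄^ℕ/U` of
the Boolean frame `𝔄 = (𝒫(ℕ) × 𝒫(ℕ), F12)` fails the congruence extension property;
moreover `HS(𝔄^ℕ/U) ≠ SH(𝔄^ℕ/U)`. -/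
theorem stmt_13 (U : Ultrafilter ℕ) (hU : ∀ a : ℕ, (U : Filter ℕ) ≠ pure a) :
    ¬ HasCEP (Filter.Germ.map F12 :
        Filter.Germ (U : Filter ℕ) (Set ℕ × Set ℕ) → Filter.Germ (U : Filter ℕ) (Set ℕ × Set ℕ)) ∧
    ¬ (∀ (δ : Type) (iδ : BooleanAlgebra δ) (g : δ → δ),
        @MemHS (Filter.Germ (U : Filter ℕ) (Set ℕ × Set ℕ)) δ _ iδ (Filter.Germ.map F12) g ↔
        @MemSH (Filter.Germ (U : Filter ℕ) (Set ℕ × Set ℕ)) δ _ iδ (Filter.Germ.map F12) g) := by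
  constructor
  · exact Stmt13.not_hasCEP U hU
  · intro hiff
    exact Stmt13.notSH U hU
      ((hiff (Bool × Bool) inferInstance Stmt13.gB).mp (Stmt13.memHS hU))
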